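/- For every pair of functions f₁, f₂ ∈ L^1[0,1], there exist points 0 ≤ x₁ ≤ x₂ ≤ 1 such that the switch function σ = Σ₂(x₁,x₂), defined by σ(t) = 1 for t ∈ [0,x₁) ∪ [x₂,1] and σ(t) = -1 for t ∈ [x₁,x₂), satisfies ∫₀¹ σ(t) f₁(t) dt = 0 and ∫₀¹ σ(t) f₂(t) dt = 0. -/

import Mathlib

open MeasureTheory

noncomputable def rho : ℝ → ℝ := Real.smoothTransition
noncomputable def rho' : ℝ → ℝ := deriv Real.smoothTransition

lemma rho_hasDerivAt (x : ℝ) : HasDerivAt rho (rho' x) x :=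
  ((Real.smoothTransition.contDiff (n := 1)).differentiable (by simp)).differentiableAt.hasDerivAt

lemma rho'_continuous : Continuous rho' :=
  (Real.smoothTransition.contDiff (n := 1)).continuous_deriv le_rfl

lemma rho_continuous : Continuous rho := Real.smoothTransition.continuous

lemma rho_nonneg (x : ℝ) : 0 ≤ rho x := Real.smoothTransition.nonneg x
lemma rho_le_one (x : ℝ) : rho x ≤ 1 := Real.smoothTransition.le_one x
lemma rho_zero : rho 0 = 0 := Real.smoothTransition.zero
lemma rho_one : rho 1 = 1 := Real.smoothTransition.one

lemma const_of_exp_const {u : ℝ → ℂ} (hu : Continuous u) {v : ℂ}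
    (h : ∀ s, Complex.exp (u s) = v) (s : ℝ) : u s = u 0 := by
  have h1 : ∀ s : ℝ, ∃ n : ℤ, u s - u 0 = n * (2 * Real.pi * Complex.I) := by
    intro s
    rw [← Complex.exp_eq_one_iff, Complex.exp_sub, h s, h 0, div_self]
    rw [← h 0]; exact Complex.exp_ne_zero _
  set m : ℝ → ℝ := fun s => (u s - u 0).im / (2 * Real.pi) with hm
  have hmc : Continuous m := (Complex.continuous_im.comp (hu.sub continuous_const)).div_const _
  have hpi : (2 * Real.pi) ≠ 0 := by positivity
  have hint : ∀ s : ℝ, ∃ n : ℤ, m s = n := by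
    intro s
    obtain ⟨n, hn⟩ := h1 s
    refine ⟨n, ?_⟩
    simp only [hm, hn]
    simp [Complex.mul_im, Complex.mul_re]
  obtain ⟨n, hn⟩ := h1 s
  rcases eq_or_ne n 0 with h0 | h0
  · rw [h0] at hn; simp at hn; linear_combination hn
  · exfalso
    have hm0 : m 0 = 0 := by simp [hm]
    have hms : m s = n := by
      simp only [hm, hn]
      simp [Complex.mul_im, Complex.mul_re]
    set c : ℝ := if 0 < n then (1/2 : ℝ) else (-1/2 : ℝ) with hc
    have hcmem : c ∈ Set.uIcc (m 0) (m s) := by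
      rw [hm0, hms, Set.mem_uIcc]
      rcases lt_or_gt_of_ne h0 with hneg | hpos
      · right
        constructor
        · have h2 : n ≤ -1 := by omega
          have : (n : ℝ) ≤ -1 := by exact_mod_cast h2
          simp only [hc, if_neg (not_lt.2 hneg.le)]; linarith
        · simp only [hc, if_neg (not_lt.2 hneg.le)]; norm_num
      · left
        constructor
        · simp only [hc, if_pos hpos]; norm_num
        · have : (1 : ℝ) ≤ n := by exact_mod_cast hpos
          simp only [hc, if_pos hpos]; linarith
    obtain ⟨s', _, hs'⟩ := intermediate_value_uIcc (hmc.continuousOn (s := Set.uIcc 0 s)) hcmem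
    obtain ⟨n', hn'⟩ := hint s'
    rw [hs'] at hn'
    rcases lt_or_gt_of_ne h0 with hneg | hpos
    · rw [hc, if_neg (not_lt.2 hneg.le)] at hn'
      have : (2 : ℝ) * n' = -1 := by linarith
      have : (2 * n' : ℤ) = -1 := by exact_mod_cast this
      omega
    · rw [hc, if_pos hpos] at hn'
      have : (2 : ℝ) * n' = 1 := by linarith
      have : (2 * n' : ℤ) = 1 := by exact_mod_cast this
      omega

noncomputable def gfun (w : ℝ → ℂ) (c : ℂ) (s t : ℝ) : ℂ := w (rho t) - w (rho s * rho t) - c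

noncomputable def Dfun (w' : ℝ → ℂ) (s t σ : ℝ) : ℂ :=
  (rho' (σ*t) * t) • w' (rho (σ*t))
   - ((rho' (σ*s) * s) * rho (σ*t) + rho (σ*s) * (rho' (σ*t) * t)) • w' (rho (σ*s) * rho (σ*t))

lemma hasDerivAt_radial (w w' : ℝ → ℂ) (hw : ∀ x, HasDerivAt w (w' x) x) (c : ℂ)
    (s t σ : ℝ) :
    HasDerivAt (fun r => gfun w c (r*s) (r*t)) (Dfun w' s t σ) σ := by
  have h1t : HasDerivAt (fun r : ℝ => rho (r*t)) (rho' (σ*t) * t) σ := by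
    exact (rho_hasDerivAt (σ*t)).comp σ (hasDerivAt_mul_const t)
  have h1s : HasDerivAt (fun r : ℝ => rho (r*s)) (rho' (σ*s) * s) σ := by
    exact (rho_hasDerivAt (σ*s)).comp σ (hasDerivAt_mul_const s)
  have h2 : HasDerivAt (fun r => w (rho (r*t))) ((rho' (σ*t) * t) • w' (rho (σ*t))) σ := by
    exact (hw (rho (σ*t))).scomp σ h1t
  have h3 : HasDerivAt (fun r : ℝ => rho (r*s) * rho (r*t))
      ((rho' (σ*s) * s) * rho (σ*t) + rho (σ*s) * (rho' (σ*t) * t)) σ := h1s.mul h1t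
  have h4 : HasDerivAt (fun r => w (rho (r*s) * rho (r*t)))
      (((rho' (σ*s) * s) * rho (σ*t) + rho (σ*s) * (rho' (σ*t) * t)) •
        w' (rho (σ*s) * rho (σ*t))) σ := by
    exact (hw (rho (σ*s) * rho (σ*t))).scomp σ h3
  simpa [gfun, Dfun] using (h2.sub h4).sub_const c

set_option maxHeartbeats 1000000 in
noncomputable def Hfun (w w' : ℝ → ℂ) (c : ℂ) (s t σ : ℝ) : ℂ :=
  Dfun w' s t σ / gfun w c (σ*s) (σ*t)

noncomputable def thetaFun (w w' : ℝ → ℂ) (c : ℂ) (s t : ℝ) : ℂ :=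
  Complex.log (-c) + ∫ σ in (0:ℝ)..1, Hfun w w' c s t σ

theorem smooth_case (w w' : ℝ → ℂ) (hw : ∀ x, HasDerivAt w (w' x) x) (hw' : Continuous w') :
    ∃ x₁ x₂ : ℝ, 0 ≤ x₁ ∧ x₁ ≤ x₂ ∧ x₂ ≤ 1 ∧ w x₂ - w x₁ = (w 1 - w 0) / 2 := by
  by_contra hcon
  push_neg at hcon
  set c : ℂ := (w 1 - w 0) / 2 with hcdef
  have hwc : Continuous w := by
    rw [continuous_iff_continuousAt]; exact fun x => (hw x).continuousAt
  have hne : ∀ s t : ℝ, gfun w c s t ≠ 0 := by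
    intro s t
    have h := hcon (rho s * rho t) (rho t) (mul_nonneg (rho_nonneg s) (rho_nonneg t))
      (mul_le_of_le_one_left (rho_nonneg t) (rho_le_one s)) (rho_le_one t)
    intro hh
    apply h
    have : w (rho t) - w (rho s * rho t) - c = 0 := hh
    linear_combination this
  have h10 : gfun w c 1 0 = -c := by simp [gfun, rho_zero]
  have hc : (-c : ℂ) ≠ 0 := h10 ▸ hne 1 0
  -- H and theta
  have hDc : Continuous (fun q : (ℝ × ℝ) × ℝ => Dfun w' q.1.1 q.1.2 q.2) := by
    have h1 := rho_continuous
    have h2 := rho'_continuous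
    unfold Dfun
    fun_prop
  have hGc : Continuous (fun q : (ℝ × ℝ) × ℝ => gfun w c (q.2 * q.1.1) (q.2 * q.1.2)) := by
    have h1 := rho_continuous
    unfold gfun
    fun_prop
  have hHc : Continuous (fun q : (ℝ × ℝ) × ℝ => Hfun w w' c q.1.1 q.1.2 q.2) := by
    unfold Hfun
    exact hDc.div hGc (fun q => hne _ _)
  have hθc : Continuous (fun p : ℝ × ℝ => thetaFun w w' c p.1 p.2) := by
    apply continuous_const.add
    exact intervalIntegral.continuous_parametric_intervalIntegral_of_continuous'
      (f := fun p : ℝ × ℝ => fun σ => Hfun w w' c p.1 p.2 σ) (μ := volume) hHc 0 1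
  -- the exponential identity
  have hexp : ∀ s t : ℝ, Complex.exp (thetaFun w w' c s t) = gfun w c s t := by
    intro s t
    have hHsc : Continuous (fun σ => Hfun w w' c s t σ) := by
      have h1 := rho_continuous
      have h2 := rho'_continuous
      have hD1 : Continuous (fun σ => Dfun w' s t σ) := by unfold Dfun; fun_prop
      have hG1 : Continuous (fun σ : ℝ => gfun w c (σ*s) (σ*t)) := by unfold gfun; fun_prop
      unfold Hfun
      exact hD1.div hG1 (fun σ => hne _ _)
    set Θ : ℝ → ℂ := fun r => Complex.log (-c) + ∫ σ in (0:ℝ)..r, Hfun w w' c s t σ with hΘdef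
    have hΘd : ∀ r, HasDerivAt Θ (Hfun w w' c s t r) r := by
      intro r
      exact ((hHsc.integral_hasStrictDerivAt 0 r).hasDerivAt).const_add (Complex.log (-c))
    set E : ℝ → ℂ := fun r => gfun w c (r*s) (r*t) * Complex.exp (-Θ r) with hEdef
    have hEd : ∀ r, HasDerivAt E 0 r := by
      intro r
      have h1 := (hasDerivAt_radial w w' hw c s t r).mul ((hΘd r).neg.cexp)
      have hgne : gfun w c (r*s) (r*t) ≠ 0 := hne _ _
      have heq : Dfun w' s t r * Complex.exp (-Θ r) +
          gfun w c (r*s) (r*t) * (Complex.exp (-Θ r) * -Hfun w w' c s t r) = 0 := by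
        unfold Hfun
        field_simp
        ring
      rwa [Pi.neg_apply, heq] at h1
    have hconst : E 1 = E 0 :=
      is_const_of_deriv_eq_zero (fun x => (hEd x).differentiableAt)
        (fun x => (hEd x).deriv) 1 0
    have hE0 : E 0 = 1 := by
      have hg00 : gfun w c 0 0 = -c := by simp [gfun, rho_zero]
      have hΘ0 : Θ 0 = Complex.log (-c) := by simp [hΘdef]
      rw [hEdef]
      simp only [zero_mul, hΘ0, hg00]
      rw [Complex.exp_neg, Complex.exp_log hc]
      exact mul_inv_cancel₀ hc
    have hE1 : gfun w c s t * Complex.exp (-Θ 1) = 1 := by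
      have := hconst.trans hE0
      simpa [hEdef] using this
    have hθeq : thetaFun w w' c s t = Θ 1 := rfl
    rw [hθeq]
    have := congrArg (· * Complex.exp (Θ 1)) hE1
    simpa [mul_assoc, ← Complex.exp_add] using this.symm
  -- edge values
  have hg_1t : ∀ t : ℝ, gfun w c 1 t = -c := by
    intro t; simp [gfun, rho_one]
  have hg_s0 : ∀ s : ℝ, gfun w c s 0 = -c := by
    intro s; simp [gfun, rho_zero]
  have hg_s1 : ∀ s : ℝ, gfun w c s 1 = -(gfun w c 0 s) := by
    intro s
    simp only [gfun, rho_one, rho_zero, mul_one, zero_mul, one_mul]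
    rw [hcdef]; ring
  -- constancy of the three edge functions
  have hu1 : ∀ s : ℝ, Complex.exp (thetaFun w w' c s 1 - thetaFun w w' c 0 s) = -1 := by
    intro s
    rw [Complex.exp_sub, hexp, hexp, hg_s1]
    rw [neg_div, div_self (hne 0 s)]
  have hu2 : ∀ t : ℝ, Complex.exp (thetaFun w w' c 1 t - thetaFun w w' c 1 0) = 1 := by
    intro t
    rw [Complex.exp_sub, hexp, hexp, hg_1t, hg_1t 0, div_self hc]
  have hu3 : ∀ s : ℝ, Complex.exp (thetaFun w w' c s 0 - thetaFun w w' c 0 0) = 1 := by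
    intro s
    rw [Complex.exp_sub, hexp, hexp, hg_s0, hg_s0 0, div_self hc]
  have hc1 : Continuous (fun s : ℝ => thetaFun w w' c s 1 - thetaFun w w' c 0 s) := by
    fun_prop
  have hc2 : Continuous (fun t : ℝ => thetaFun w w' c 1 t - thetaFun w w' c 1 0) := by
    fun_prop
  have hc3 : Continuous (fun s : ℝ => thetaFun w w' c s 0 - thetaFun w w' c 0 0) := by
    fun_prop
  have e1 := const_of_exp_const hc1 hu1 1
  have e2 := const_of_exp_const hc2 hu2 1
  have e3 := const_of_exp_const hc3 hu3 1
  simp only [sub_self, sub_zero] at e2 e3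
  -- e2 : thetaFun w w' c 1 1 - thetaFun w w' c 1 0 = thetaFun w w' c 1 0 - thetaFun w w' c 1 0?? careful
  have hθ11 : thetaFun w w' c 1 1 = thetaFun w w' c 0 0 := by
    have h2 : thetaFun w w' c 1 1 = thetaFun w w' c 1 0 := by linear_combination e2
    have h3 : thetaFun w w' c 1 0 = thetaFun w w' c 0 0 := by linear_combination e3
    rw [h2, h3]
  have hθ01 : thetaFun w w' c 0 1 = thetaFun w w' c 0 0 := by
    -- e1 : thetaFun w w' c 1 1 - thetaFun w w' c 0 1 = thetaFun w w' c 0 1 - thetaFun w w' c 0 0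
    rw [hθ11] at e1
    linear_combination -e1/2
  have : Complex.exp (thetaFun w w' c 0 1 - thetaFun w w' c 0 0) = -1 := hu1 0
  rw [hθ01, sub_self, Complex.exp_zero] at this
  norm_num at this

theorem cont_case (F₁ F₂ : ℝ → ℝ) (h₁ : ContinuousOn F₁ (Set.Icc 0 1))
    (h₂ : ContinuousOn F₂ (Set.Icc 0 1)) :
    ∃ x₁ x₂ : ℝ, 0 ≤ x₁ ∧ x₁ ≤ x₂ ∧ x₂ ≤ 1 ∧
      F₁ x₂ - F₁ x₁ = (F₁ 1 - F₁ 0) / 2 ∧ F₂ x₂ - F₂ x₁ = (F₂ 1 - F₂ 0) / 2 := by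
  set K : Set (ℝ × ℝ) := {p | 0 ≤ p.1 ∧ p.1 ≤ p.2 ∧ p.2 ≤ 1} with hK
  have hKsub : K ⊆ Set.Icc 0 1 ×ˢ Set.Icc 0 1 := by
    rintro ⟨a, b⟩ ⟨hb1, hb2, hb3⟩
    exact ⟨⟨hb1, hb2.trans hb3⟩, ⟨hb1.trans hb2, hb3⟩⟩
  have hKclosed : IsClosed K := by
    apply IsClosed.inter (isClosed_le continuous_const continuous_fst)
    exact (isClosed_le continuous_fst continuous_snd).inter
      (isClosed_le continuous_snd continuous_const)
  have hKc : IsCompact K :=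
    (isCompact_Icc.prod isCompact_Icc).of_isClosed_subset hKclosed hKsub
  have hKne : K.Nonempty := ⟨(0, 0), by constructor <;> simp⟩
  set G : ℝ × ℝ → ℝ := fun p =>
    |F₁ p.2 - F₁ p.1 - (F₁ 1 - F₁ 0) / 2| ⊔ |F₂ p.2 - F₂ p.1 - (F₂ 1 - F₂ 0) / 2| with hG
  have hmem : ∀ p ∈ K, p.1 ∈ Set.Icc (0:ℝ) 1 ∧ p.2 ∈ Set.Icc (0:ℝ) 1 := by
    intro p hp
    have := hKsub hp
    exact ⟨this.1, this.2⟩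
  have hGc : ContinuousOn G K := by
    have c1 : ContinuousOn (fun p : ℝ × ℝ => F₁ p.2) K :=
      h₁.comp continuous_snd.continuousOn (fun p hp => (hmem p hp).2)
    have c2 : ContinuousOn (fun p : ℝ × ℝ => F₁ p.1) K :=
      h₁.comp continuous_fst.continuousOn (fun p hp => (hmem p hp).1)
    have c3 : ContinuousOn (fun p : ℝ × ℝ => F₂ p.2) K :=
      h₂.comp continuous_snd.continuousOn (fun p hp => (hmem p hp).2)
    have c4 : ContinuousOn (fun p : ℝ × ℝ => F₂ p.1) K :=
      h₂.comp continuous_fst.continuousOn (fun p hp => (hmem p hp).1)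
    exact (((c1.sub c2).sub continuousOn_const).abs).sup
      (((c3.sub c4).sub continuousOn_const).abs)
  obtain ⟨p₀, hp₀K, hmin⟩ := hKc.exists_isMinOn hKne hGc
  have key : ∀ ε : ℝ, 0 < ε → G p₀ < 3 * ε := by
    intro ε hε
    obtain ⟨P₁, hP₁⟩ := exists_polynomial_near_of_continuousOn 0 1 F₁ h₁ ε hε
    obtain ⟨P₂, hP₂⟩ := exists_polynomial_near_of_continuousOn 0 1 F₂ h₂ ε hε
    set w : ℝ → ℂ := fun x => ((P₁.eval x : ℝ) : ℂ) + ((P₂.eval x : ℝ) : ℂ) * Complex.I with hw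
    set w' : ℝ → ℂ := fun x =>
      ((P₁.derivative.eval x : ℝ) : ℂ) + ((P₂.derivative.eval x : ℝ) : ℂ) * Complex.I with hw'
    have hwd : ∀ x, HasDerivAt w (w' x) x := by
      intro x
      have d1 : HasDerivAt (fun x : ℝ => ((P₁.eval x : ℝ) : ℂ)) ((P₁.derivative.eval x : ℝ) : ℂ) x :=
        (P₁.hasDerivAt x).ofReal_comp
      have d2 : HasDerivAt (fun x : ℝ => ((P₂.eval x : ℝ) : ℂ)) ((P₂.derivative.eval x : ℝ) : ℂ) x :=
        (P₂.hasDerivAt x).ofReal_comp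
      exact d1.add (d2.mul_const Complex.I)
    have hw'c : Continuous w' := by
      apply Continuous.add
      · exact Complex.continuous_ofReal.comp P₁.derivative.continuous_aeval
      · exact (Complex.continuous_ofReal.comp P₂.derivative.continuous_aeval).mul continuous_const
    obtain ⟨x₁, x₂, hx0, hx12, hx21, hsm⟩ := smooth_case w w' hwd hw'c
    have hsm2 : 2 * (w x₂ - w x₁) = w 1 - w 0 := by linear_combination (2:ℂ) * hsm
    have hre : 2 * (P₁.eval x₂ - P₁.eval x₁) = P₁.eval 1 - P₁.eval 0 := by
      have := congrArg Complex.re hsm2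
      simpa [hw, Complex.mul_re] using this
    have him : 2 * (P₂.eval x₂ - P₂.eval x₁) = P₂.eval 1 - P₂.eval 0 := by
      have := congrArg Complex.im hsm2
      simpa [hw, Complex.mul_im] using this
    have hmemK : (x₁, x₂) ∈ K := ⟨hx0, hx12, hx21⟩
    have hbound : G (x₁, x₂) < 3 * ε := by
      have A1 := hP₁ x₂ ⟨hx0.trans hx12, hx21⟩
      have A2 := hP₁ x₁ ⟨hx0, hx12.trans hx21⟩
      have A3 := hP₁ 1 ⟨zero_le_one, le_refl 1⟩
      have A4 := hP₁ 0 ⟨le_refl 0, zero_le_one⟩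
      have B1 := hP₂ x₂ ⟨hx0.trans hx12, hx21⟩
      have B2 := hP₂ x₁ ⟨hx0, hx12.trans hx21⟩
      have B3 := hP₂ 1 ⟨zero_le_one, le_refl 1⟩
      have B4 := hP₂ 0 ⟨le_refl 0, zero_le_one⟩
      rw [abs_lt] at A1 A2 A3 A4 B1 B2 B3 B4
      rw [hG]
      apply max_lt
      · rw [abs_lt]; constructor <;> linarith
      · rw [abs_lt]; constructor <;> linarith
    calc G p₀ ≤ G (x₁, x₂) := hmin hmemK
      _ < 3 * ε := hbound
  have hG0 : G p₀ ≤ 0 := by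
    by_contra hpos
    push_neg at hpos
    have := key (G p₀ / 4) (by linarith)
    linarith
  refine ⟨p₀.1, p₀.2, hp₀K.1, hp₀K.2.1, hp₀K.2.2, ?_, ?_⟩
  · have h1 : |F₁ p₀.2 - F₁ p₀.1 - (F₁ 1 - F₁ 0) / 2| ≤ 0 := le_trans (le_max_left _ _) hG0
    have := abs_nonneg (F₁ p₀.2 - F₁ p₀.1 - (F₁ 1 - F₁ 0) / 2)
    have h2 : |F₁ p₀.2 - F₁ p₀.1 - (F₁ 1 - F₁ 0) / 2| = 0 := le_antisymm h1 this
    rw [abs_eq_zero, sub_eq_zero] at h2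
    exact h2
  · have h1 : |F₂ p₀.2 - F₂ p₀.1 - (F₂ 1 - F₂ 0) / 2| ≤ 0 := le_trans (le_max_right _ _) hG0
    have := abs_nonneg (F₂ p₀.2 - F₂ p₀.1 - (F₂ 1 - F₂ 0) / 2)
    have h2 : |F₂ p₀.2 - F₂ p₀.1 - (F₂ 1 - F₂ 0) / 2| = 0 := le_antisymm h1 this
    rw [abs_eq_zero, sub_eq_zero] at h2
    exact h2

lemma integral_reduce (f : ℝ → ℝ) (hf : IntegrableOn f (Set.Icc 0 1)) {x₁ x₂ : ℝ}
    (h0 : 0 ≤ x₁) (h12 : x₁ ≤ x₂) (h21 : x₂ ≤ 1) :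
    (∫ t in (0:ℝ)..1, (if x₁ ≤ t ∧ t < x₂ then (-1:ℝ) else 1) * f t)
      = (∫ t in (0:ℝ)..1, f t) - 2 * ∫ t in x₁..x₂, f t := by
  have hfu : IntegrableOn f (Set.uIcc (0:ℝ) 1) := by
    rw [Set.uIcc_of_le zero_le_one]; exact hf
  have hfi : IntervalIntegrable f volume 0 1 := hfu.intervalIntegrable
  have hfIoc : IntegrableOn f (Set.Ioc (0:ℝ) 1) := hf.mono_set Set.Ioc_subset_Icc_self
  have hind : IntervalIntegrable ((Set.Ico x₁ x₂).indicator f) volume 0 1 := by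
    rw [intervalIntegrable_iff_integrableOn_Ioc_of_le zero_le_one]
    exact hfIoc.indicator measurableSet_Ico
  have hpt : ∀ t : ℝ, (if x₁ ≤ t ∧ t < x₂ then (-1:ℝ) else 1) * f t
      = f t - 2 * (Set.Ico x₁ x₂).indicator f t := by
    intro t
    by_cases h : x₁ ≤ t ∧ t < x₂
    · rw [if_pos h, Set.indicator_of_mem (Set.mem_Ico.mpr h)]; ring
    · rw [if_neg h, Set.indicator_of_notMem (fun hmem => h (Set.mem_Ico.mp hmem))]; ring
  have hstep : (∫ t in (0:ℝ)..1, (if x₁ ≤ t ∧ t < x₂ then (-1:ℝ) else 1) * f t)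
      = ∫ t in (0:ℝ)..1, (f t - 2 * (Set.Ico x₁ x₂).indicator f t) := by
    apply intervalIntegral.integral_congr
    intro t _
    exact hpt t
  rw [hstep, intervalIntegral.integral_sub hfi (hind.const_mul 2),
    intervalIntegral.integral_const_mul]
  congr 1
  rw [intervalIntegral.integral_of_le zero_le_one, intervalIntegral.integral_of_le h12]
  rw [setIntegral_indicator measurableSet_Ico]
  congr 1
  apply setIntegral_congr_set
  rw [MeasureTheory.ae_eq_set]
  constructor
  · refine measure_mono_null ?_ (measure_singleton x₁)
    rintro t ⟨⟨⟨ht0, ht1⟩, ⟨htx1, htx2⟩⟩, hnot⟩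
    show t = x₁
    rcases not_and_or.mp hnot with h | h
    · exact le_antisymm (not_lt.mp h) htx1
    · exact absurd htx2.le h
  · refine measure_mono_null ?_ (measure_singleton x₂)
    rintro t ⟨⟨htx1, htx2⟩, hnot⟩
    show t = x₂
    rcases not_and_or.mp hnot with h | h
    · exact absurd ⟨lt_of_le_of_lt h0 htx1, htx2.trans h21⟩ h
    · rcases not_and_or.mp h with h' | h'
      · exact absurd htx1.le h'
      · exact le_antisymm htx2 (not_lt.mp h')

theorem stmt_2 (f₁ f₂ : ℝ → ℝ) (hf₁ : IntegrableOn f₁ (Set.Icc 0 1))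
    (hf₂ : IntegrableOn f₂ (Set.Icc 0 1)) :
    ∃ x₁ x₂ : ℝ, 0 ≤ x₁ ∧ x₁ ≤ x₂ ∧ x₂ ≤ 1 ∧
      (∫ t in (0:ℝ)..1, (if x₁ ≤ t ∧ t < x₂ then (-1:ℝ) else 1) * f₁ t) = 0 ∧
      (∫ t in (0:ℝ)..1, (if x₁ ≤ t ∧ t < x₂ then (-1:ℝ) else 1) * f₂ t) = 0 := by
  have hu₁ : IntegrableOn f₁ (Set.uIcc (0:ℝ) 1) := by
    rw [Set.uIcc_of_le zero_le_one]; exact hf₁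
  have hu₂ : IntegrableOn f₂ (Set.uIcc (0:ℝ) 1) := by
    rw [Set.uIcc_of_le zero_le_one]; exact hf₂
  set F₁ : ℝ → ℝ := fun x => ∫ t in (0:ℝ)..x, f₁ t with hF₁
  set F₂ : ℝ → ℝ := fun x => ∫ t in (0:ℝ)..x, f₂ t with hF₂
  have hF₁c : ContinuousOn F₁ (Set.Icc 0 1) := by
    have := intervalIntegral.continuousOn_primitive_interval (a := 0) (b := 1)
      (μ := volume) hu₁
    rwa [Set.uIcc_of_le zero_le_one] at this
  have hF₂c : ContinuousOn F₂ (Set.Icc 0 1) := by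
    have := intervalIntegral.continuousOn_primitive_interval (a := 0) (b := 1)
      (μ := volume) hu₂
    rwa [Set.uIcc_of_le zero_le_one] at this
  obtain ⟨x₁, x₂, h0, h12, h21, e₁, e₂⟩ := cont_case F₁ F₂ hF₁c hF₂c
  have hsub1 : Set.uIcc 0 x₁ ⊆ Set.uIcc (0:ℝ) 1 := by
    rw [Set.uIcc_of_le h0, Set.uIcc_of_le zero_le_one]
    exact Set.Icc_subset_Icc le_rfl (h12.trans h21)
  have hsub2 : Set.uIcc x₁ x₂ ⊆ Set.uIcc (0:ℝ) 1 := by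
    rw [Set.uIcc_of_le h12, Set.uIcc_of_le zero_le_one]
    exact Set.Icc_subset_Icc h0 h21
  refine ⟨x₁, x₂, h0, h12, h21, ?_, ?_⟩
  · rw [integral_reduce f₁ hf₁ h0 h12 h21]
    have hadj : (∫ t in (0:ℝ)..x₁, f₁ t) + (∫ t in x₁..x₂, f₁ t) = ∫ t in (0:ℝ)..x₂, f₁ t :=
      intervalIntegral.integral_add_adjacent_intervals
        (hu₁.intervalIntegrable.mono_set hsub1) (hu₁.intervalIntegrable.mono_set hsub2)
    have r1 : (∫ t in (0:ℝ)..x₁, f₁ t) = F₁ x₁ := rfl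
    have r2 : (∫ t in (0:ℝ)..x₂, f₁ t) = F₁ x₂ := rfl
    have r3 : (∫ t in (0:ℝ)..1, f₁ t) = F₁ 1 := rfl
    have r4 : F₁ 0 = 0 := intervalIntegral.integral_same
    rw [r1, r2] at hadj
    rw [r3]
    linarith
  · rw [integral_reduce f₂ hf₂ h0 h12 h21]
    have hadj : (∫ t in (0:ℝ)..x₁, f₂ t) + (∫ t in x₁..x₂, f₂ t) = ∫ t in (0:ℝ)..x₂, f₂ t :=
      intervalIntegral.integral_add_adjacent_intervals
        (hu₂.intervalIntegrable.mono_set hsub1) (hu₂.intervalIntegrable.mono_set hsub2)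
    have r1 : (∫ t in (0:ℝ)..x₁, f₂ t) = F₂ x₁ := rfl
    have r2 : (∫ t in (0:ℝ)..x₂, f₂ t) = F₂ x₂ := rfl
    have r3 : (∫ t in (0:ℝ)..1, f₂ t) = F₂ 1 := rfl
    have r4 : F₂ 0 = 0 := intervalIntegral.integral_same
    rw [r1, r2] at hadj
    rw [r3]
    linarith
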